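/- arXiv:1608.01701 — 2 statements merged into one kernel-verified Lean document; each statement's English description precedes it below -/
import Mathlib

section
/- Let A and B be spectra of topological spaces with structure maps α_n : A_n → Ω A_{n+1} and β_n : B_n → Ω B_{n+1}, such that each adjoint structure map Σ A_n → A_{n+1} is a cofibration. If T = (T_n : A_n → B_n) is a sequence of pointed maps such that β_n ∘ T_n is pointed-homotopic to (Ω T_{n+1}) ∘ α_n for all n, then there exists a strict spectrum map T̃ (i.e. β_n ∘ T̃_n = (Ω T̃_{n+1}) ∘ α_n strictly, in adjoint form T̃_{n+1} ∘ α_n^{ad} = β_n^{ad} ∘ Σ T̃_n) with each T̃_n pointed-homotopic to T_n. -/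
/-!
Statement 0: strictification of weak spectrum maps (Lemma `strictification-of-spectrummaps`).
A spectrum is a sequence of pointed spaces `A n` with pointed structure maps
`α n : A n → Ω (A (n+1))`, whose adjoints `αad n : Σ (A n) → A (n+1)` are assumed to be
cofibrations.  Given a weak spectrum map `T` (levelwise pointed maps commuting with the
structure maps up to pointed homotopy), there is a strictification `T'`: a strict spectrum
map (expressed in adjoint form) with `T' n` pointed-homotopic to `T n`.
-/

noncomputable section

/-- The based loop space of a pointed space, as a subspace of `C(I, Y)`. -/
def Loop (Y : Type) [TopologicalSpace Y] (y : Y) : Type :=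
  {γ : C(unitInterval, Y) // γ 0 = y ∧ γ 1 = y}

instance (Y : Type) [TopologicalSpace Y] (y : Y) : TopologicalSpace (Loop Y y) :=
  instTopologicalSpaceSubtype

/-- The constant loop, the basepoint of the loop space. -/
def Loop.const (Y : Type) [TopologicalSpace Y] (y : Y) : Loop Y y :=
  ⟨ContinuousMap.const _ y, rfl, rfl⟩

/-- Functoriality of the loop space: `Ω f`. -/
def Loop.map {Y Z : Type} [TopologicalSpace Y] [TopologicalSpace Z] (f : C(Y, Z)) {y : Y} {z : Z}
    (hf : f y = z) : C(Loop Y y, Loop Z z) :=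
  ⟨fun γ => ⟨f.comp γ.1, by simp [γ.2.1, hf], by simp [γ.2.2, hf]⟩, by
    apply Continuous.subtype_mk
    exact (ContinuousMap.continuous_postcomp f).comp continuous_subtype_val⟩

/-- The relation defining the reduced suspension of a pointed space: collapse the two ends
of the cylinder and the segment over the basepoint. -/
def SuspRel (X : Type) [TopologicalSpace X] (x₀ : X) (p q : X × unitInterval) : Prop :=
  (p.2 = 0 ∧ q.2 = 0) ∨ (p.2 = 1 ∧ q.2 = 1) ∨ (p.1 = x₀ ∧ q.1 = x₀) ∨ p = q

/-- The reduced suspension `Σ X` of a pointed space. -/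
def Susp (X : Type) [TopologicalSpace X] (x₀ : X) : Type :=
  Quot (SuspRel X x₀)

instance (X : Type) [TopologicalSpace X] (x₀ : X) : TopologicalSpace (Susp X x₀) := by
  unfold Susp; infer_instance

/-- The basepoint of the reduced suspension. -/
def Susp.pt (X : Type) [TopologicalSpace X] (x₀ : X) : Susp X x₀ :=
  Quot.mk _ (x₀, 0)

/-- A map is a cofibration if it has the homotopy extension property with respect to
every space. -/
def IsCofibration {X Y : Type} [TopologicalSpace X] [TopologicalSpace Y] (i : C(X, Y)) : Prop :=
  ∀ (Z : Type) [TopologicalSpace Z] (g : C(Y, Z)) (H : C(X × unitInterval, Z)),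
    (∀ x, H (x, 0) = g (i x)) →
    ∃ G : C(Y × unitInterval, Z), (∀ y, G (y, 0) = g y) ∧ ∀ x t, G (i x, t) = H (x, t)

open unitInterval in
/-- The inductive step: given a strictified map at level `n`, strictify at level `n+1`. -/
lemma step_lemma
    {X Y X' Y' : Type} [TopologicalSpace X] [TopologicalSpace Y]
    [TopologicalSpace X'] [TopologicalSpace Y']
    (x0 : X) (y0 : Y) (x0' : X') (y0' : Y')
    (α : C(X, Loop X' x0')) (hα : α x0 = Loop.const _ _)
    (β : C(Y, Loop Y' y0'))
    (αad : C(Susp X x0, X')) (hαadpt : αad (Susp.pt X x0) = x0')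
    (hadjA : ∀ x t, (α x).1 t = αad (Quot.mk _ (x, t)))
    (βad : C(Susp Y y0, Y'))
    (hadjB : ∀ y t, (β y).1 t = βad (Quot.mk _ (y, t)))
    (hcof : IsCofibration αad)
    (T : C(X, Y)) (T1 : C(X', Y')) (hT1 : T1 x0' = y0')
    (hw : (β.comp T).HomotopyRel ((Loop.map T1 hT1).comp α) {x0})
    (T' : C(X, Y)) (hp : T'.HomotopyRel T {x0}) :
    ∃ g : C(X', Y'), g x0' = y0' ∧ Nonempty (g.HomotopyRel T1 {x0'}) ∧
      ∀ x t, g (αad (Quot.mk _ (x, t))) = βad (Quot.mk _ (T' x, t)) := by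
  classical
  -- the loop-level homotopy, from `Ω T1 ∘ α` to `β ∘ T'`, rel the basepoint
  have Hs : ((Loop.map T1 hT1).comp α).HomotopyRel (β.comp T') {x0} :=
    hw.symm.trans (hp.symm.compContinuousMap β)
  -- pointwise facts about the associated map `K (x, t, s) = (Hs (s, x)).1 t`
  have hk0 : ∀ x s, (Hs (s, x)).1 0 = y0' := fun x s => (Hs (s, x)).2.1
  have hk1 : ∀ x s, (Hs (s, x)).1 1 = y0' := fun x s => (Hs (s, x)).2.2
  have hkx0 : ∀ t s, (Hs (s, x0)).1 t = y0' := by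
    intro t s
    have h := Hs.eq_fst s (Set.mem_singleton x0)
    rw [h]
    show T1 ((α x0).1 t) = y0'
    rw [hα]
    exact hT1
  -- continuity of `K`
  have hKc : Continuous (fun p : (X × unitInterval) × unitInterval =>
      (Hs (p.2, p.1.1)).1 p.1.2) := by
    have h1 : Continuous (⇑Hs) := Hs.continuous
    have h2 : Continuous fun p : (X × unitInterval) × unitInterval =>
        ((Hs (p.2, p.1.1)).1 : C(unitInterval, Y')) :=
      continuous_subtype_val.comp (h1.comp (by fun_prop))
    exact continuous_eval.comp (h2.prodMk (by fun_prop))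
  -- `K` is invariant under the suspension relation, hence descends to `Susp X x0 × I`
  have hinv : ∀ (s : unitInterval) (p q : X × unitInterval), SuspRel X x0 p q →
      (Hs (s, p.1)).1 p.2 = (Hs (s, q.1)).1 q.2 := by
    rintro s ⟨x, t⟩ ⟨x', t'⟩ (⟨h1, h2⟩ | ⟨h1, h2⟩ | ⟨h1, h2⟩ | h)
    · simp only at h1 h2; rw [h1, h2, hk0, hk0]
    · simp only at h1 h2; rw [h1, h2, hk1, hk1]
    · simp only at h1 h2; rw [h1, h2, hkx0, hkx0]
    · rw [h]
  let Hmap : Susp X x0 × unitInterval → Y' :=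
    fun p => Quot.liftOn p.1 (fun q => (Hs (p.2, q.1)).1 q.2) (fun u v h => hinv p.2 u v h)
  have hHc : Continuous Hmap :=
    (isQuotientMap_quot_mk (r := SuspRel X x0)).continuous_lift_prod_left hKc
  -- apply the homotopy extension property of the cofibration `αad`
  obtain ⟨G, hG0, hGi⟩ := hcof Y' T1 ⟨Hmap, hHc⟩ (by
    intro sp
    induction sp using Quot.ind with
    | _ p =>
      obtain ⟨x, t⟩ := p
      show (Hs (0, x)).1 t = T1 (αad (Quot.mk _ (x, t)))
      rw [Hs.apply_zero]
      show T1 ((α x).1 t) = T1 (αad (Quot.mk _ (x, t)))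
      rw [hadjA])
  have hGpt : ∀ s, G (x0', s) = y0' := by
    intro s
    rw [← hαadpt, hGi]
    exact hkx0 0 s
  refine ⟨⟨fun y => G (y, 1), G.continuous.comp (continuous_id.prodMk continuous_const)⟩,
    hGpt 1, ?_, ?_⟩
  · exact ⟨⟨⟨⟨fun p => G (p.2, σ p.1),
        G.continuous.comp (continuous_snd.prodMk (continuous_symm.comp continuous_fst))⟩,
        fun y => by show G (y, σ 0) = G (y, 1); rw [symm_zero],
        fun y => by show G (y, σ 1) = T1 y; rw [symm_one]; exact hG0 y⟩,
        fun t x hx => by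
          have hx' : x = x0' := hx
          show G (x, σ t) = G (x, 1)
          rw [hx', hGpt, hGpt]⟩⟩
  · intro x t
    show G (αad (Quot.mk _ (x, t)), 1) = βad (Quot.mk _ (T' x, t))
    refine (hGi (Quot.mk _ (x, t)) 1).trans ?_
    show (Hs (1, x)).1 t = βad (Quot.mk _ (T' x, t))
    rw [Hs.apply_one]
    exact hadjB (T' x) t

/-- strictification of weak spectrum maps. -/
theorem strictification_of_weak_spectrum_map
    (A B : ℕ → Type) [∀ n, TopologicalSpace (A n)] [∀ n, TopologicalSpace (B n)]
    (a : ∀ n, A n) (b : ∀ n, B n)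
    -- structure maps of the spectra, in loop form, pointed
    (α : ∀ n, C(A n, Loop (A (n + 1)) (a (n + 1)))) (hα : ∀ n, α n (a n) = Loop.const _ _)
    (β : ∀ n, C(B n, Loop (B (n + 1)) (b (n + 1)))) (hβ : ∀ n, β n (b n) = Loop.const _ _)
    -- the adjoint structure maps, pointed, compatible with the loop form
    (αad : ∀ n, C(Susp (A n) (a n), A (n + 1)))
    (hαadpt : ∀ n, αad n (Susp.pt (A n) (a n)) = a (n + 1))
    (hadjA : ∀ n (x : A n) (t : unitInterval), (α n x).1 t = αad n (Quot.mk _ (x, t)))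
    (βad : ∀ n, C(Susp (B n) (b n), B (n + 1)))
    (hβadpt : ∀ n, βad n (Susp.pt (B n) (b n)) = b (n + 1))
    (hadjB : ∀ n (x : B n) (t : unitInterval), (β n x).1 t = βad n (Quot.mk _ (x, t)))
    -- the adjoint structure maps of `A` are cofibrations
    (hcof : ∀ n, IsCofibration (αad n))
    -- a weak spectrum map `T`
    (T : ∀ n, C(A n, B n)) (hT : ∀ n, T n (a n) = b n)
    (hweak : ∀ n, Nonempty
      (((β n).comp (T n)).HomotopyRel ((Loop.map (T (n + 1)) (hT (n + 1))).comp (α n)) {a n})) :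
    -- there is a strictification
    ∃ T' : ∀ n, C(A n, B n),
      (∀ n, T' n (a n) = b n) ∧
      (∀ n, Nonempty ((T' n).HomotopyRel (T n) {a n})) ∧
      (∀ n (x : A n) (t : unitInterval),
        T' (n + 1) (αad n (Quot.mk _ (x, t))) = βad n (Quot.mk _ (T' n x, t))) := by
  classical
  have step' : ∀ n (f : C(A n, B n)), f (a n) = b n →
      Nonempty (f.HomotopyRel (T n) {a n}) →
      ∃ g : C(A (n + 1), B (n + 1)), g (a (n + 1)) = b (n + 1) ∧
        Nonempty (g.HomotopyRel (T (n + 1)) {a (n + 1)}) ∧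
        ∀ x t, g (αad n (Quot.mk _ (x, t))) = βad n (Quot.mk _ (f x, t)) := by
    intro n f hf hh
    exact step_lemma (a n) (b n) (a (n + 1)) (b (n + 1)) (α n) (hα n) (β n) (αad n)
      (hαadpt n) (hadjA n) (βad n) (hadjB n) (hcof n) (T n) (T (n + 1)) (hT (n + 1))
      (hweak n).some f hh.some
  choose F hF1 hF2 hF3 using step'
  let S : ∀ n, {f : C(A n, B n) // f (a n) = b n ∧ Nonempty (f.HomotopyRel (T n) {a n})} :=
    fun n => Nat.rec ⟨T 0, hT 0, ⟨ContinuousMap.HomotopyRel.refl _ _⟩⟩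
      (fun m ih => ⟨F m ih.1 ih.2.1 ih.2.2, hF1 m ih.1 ih.2.1 ih.2.2,
        hF2 m ih.1 ih.2.1 ih.2.2⟩) n
  refine ⟨fun n => (S n).1, fun n => (S n).2.1, fun n => (S n).2.2, ?_⟩
  intro n x t
  exact hF3 n (S n).1 (S n).2.1 (S n).2.2 x t
end
end

section
/- Moreover, the element ψ = 2^{−d/2} Π_{i=1}^d (1 − e_i c_i) ∈ Cl(V ⊕ V) is independent of the choice of orthonormal basis (v_1,…,v_d) of V used to define it: it is invariant under permutations of the basis vectors and under simultaneous rotation of any pair (v_1, v_2) in both Clifford factors, and such transformations generate O(V). -/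
/-!
Statement 11: the element `ψ = 2^{−d/2} Π_{i=1}^d (1 − e_i c_i) ∈ Cl(V ⊕ V)` is independent of
the orthonormal basis of `V` used to define it.  Here `c, e : V → A` are the two canonical
(linear) inclusions of `V` into the Clifford algebra of the negative definite form on `V ⊕ V`,
satisfying the Clifford relations; `O(V)` acts diagonally, and invariance under permutations
and rotations of pairs of basis vectors (which generate `O(V)`) gives basis independence.
-/

noncomputable section
open RealInnerProductSpace

section Aux
variable {V A : Type} [NormedAddCommGroup V] [InnerProductSpace ℝ V]
    [Ring A] [Algebra ℝ A] (c e : V →ₗ[ℝ] A)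

private lemma psi_ce (hce : ∀ v w : V, c v * e w + e w * c v = 0) (v w : V) :
    c v * e w = -(e w * c v) := eq_neg_of_add_eq_zero_left (hce v w)

private lemma psi_half {x : A} {r : ℝ} (h : x + x = algebraMap ℝ A (2*r)) :
    x = algebraMap ℝ A r := by
  have h2 : (2:ℝ) • x = algebraMap ℝ A (2*r) := by rw [two_smul]; exact h
  have hx : x = (2:ℝ)⁻¹ • ((2:ℝ) • x) := by rw [smul_smul]; norm_num
  rw [hx, h2, Algebra.smul_def, ← map_mul]
  congr 1
  ring

private lemma psi_cc_self (hcc : ∀ v w : V, c v * c w + c w * c v = algebraMap ℝ A (-2 * ⟪v, w⟫))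
    (v : V) (hv : ⟪v, v⟫ = 1) : c v * c v = algebraMap ℝ A (-1) := by
  apply psi_half
  have := hcc v v
  rw [hv] at this
  convert this using 2
  ring

private lemma psi_anticomm (hcc : ∀ v w : V, c v * c w + c w * c v = algebraMap ℝ A (-2 * ⟪v, w⟫))
    (v w : V) (hvw : ⟪v, w⟫ = 0) : c v * c w = -(c w * c v) := by
  apply eq_neg_of_add_eq_zero_left
  rw [hcc v w, hvw]
  simp

/-- the main rearrangement: `e v * c v * (e w * c w) = -(e v * e w * (c v * c w))`. -/
private lemma psi_rearrange (hce : ∀ v w : V, c v * e w + e w * c v = 0) (v w : V) :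
    (e v * c v) * (e w * c w) = -(e v * e w * (c v * c w)) := by
  calc (e v * c v) * (e w * c w) = e v * (c v * e w) * c w := by
        simp only [mul_assoc]
    _ = e v * (-(e w * c v)) * c w := by rw [psi_ce c e hce]
    _ = -(e v * e w * (c v * c w)) := by
        simp only [mul_neg, neg_mul, mul_assoc]

private lemma psi_T_comm
    (hcc : ∀ v w : V, c v * c w + c w * c v = algebraMap ℝ A (-2 * ⟪v, w⟫))
    (hee : ∀ v w : V, e v * e w + e w * e v = algebraMap ℝ A (-2 * ⟪v, w⟫))
    (hce : ∀ v w : V, c v * e w + e w * c v = 0)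
    (v w : V) (hvw : ⟪v, w⟫ = 0) :
    (e v * c v) * (e w * c w) = (e w * c w) * (e v * c v) := by
  have hwv : ⟪w, v⟫ = 0 := by rwa [real_inner_comm]
  rw [psi_rearrange c e hce, psi_rearrange c e hce,
    psi_anticomm c hcc w v hwv, psi_anticomm e hee w v hwv]
  simp only [mul_neg, neg_mul, neg_neg]

private lemma psi_T_sq
    (hcc : ∀ v w : V, c v * c w + c w * c v = algebraMap ℝ A (-2 * ⟪v, w⟫))
    (hee : ∀ v w : V, e v * e w + e w * e v = algebraMap ℝ A (-2 * ⟪v, w⟫))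
    (hce : ∀ v w : V, c v * e w + e w * c v = 0)
    (v : V) (hv : ⟪v, v⟫ = 1) :
    (e v * c v) * (e v * c v) = algebraMap ℝ A (-1) := by
  rw [psi_rearrange c e hce, psi_cc_self c hcc v hv, psi_cc_self e hee v hv,
    ← map_mul, ← map_neg]
  norm_num

end Aux
open RealInnerProductSpace Finset

section Aux2
variable {V A : Type} [NormedAddCommGroup V] [InnerProductSpace ℝ V]
    [Ring A] [Algebra ℝ A] (c e : V →ₗ[ℝ] A)

/-- The diagonal quadratic element `F = ∑ e(b i) c(b i)` is basis independent. -/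
private lemma psi_F_indep {d : ℕ} (b b' : OrthonormalBasis (Fin d) ℝ V) :
    ∑ i, e (b i) * c (b i) = ∑ j, e (b' j) * c (b' j) := by
  have hrep : ∀ (f : V →ₗ[ℝ] A) (i : Fin d), f (b i) = ∑ j, ⟪b' j, b i⟫ • f (b' j) := by
    intro f i
    conv_lhs => rw [← b'.sum_repr' (b i)]
    rw [map_sum]
    simp
  calc ∑ i, e (b i) * c (b i)
      = ∑ i, ∑ j, ∑ k, (⟪b' j, b i⟫ * ⟪b' k, b i⟫) • (e (b' j) * c (b' k)) := by
        refine Finset.sum_congr rfl fun i _ => ?_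
        rw [hrep e i, hrep c i, Finset.sum_mul_sum]
        refine Finset.sum_congr rfl fun j _ => Finset.sum_congr rfl fun k _ => ?_
        rw [smul_mul_assoc, mul_smul_comm, smul_smul]
    _ = ∑ j, ∑ k, (∑ i, ⟪b' j, b i⟫ * ⟪b' k, b i⟫) • (e (b' j) * c (b' k)) := by
        rw [Finset.sum_comm]
        refine Finset.sum_congr rfl fun j _ => ?_
        rw [Finset.sum_comm]
        refine Finset.sum_congr rfl fun k _ => ?_
        rw [Finset.sum_smul]
    _ = ∑ j, ∑ k, (if j = k then (1:ℝ) else 0) • (e (b' j) * c (b' k)) := by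
        refine Finset.sum_congr rfl fun j _ => Finset.sum_congr rfl fun k _ => ?_
        have h1 : ∀ i, ⟪b' j, b i⟫ * ⟪b' k, b i⟫ = ⟪b' j, b i⟫ * ⟪b i, b' k⟫ :=
          fun i => by rw [real_inner_comm (b' k)]
        rw [Finset.sum_congr rfl fun i _ => h1 i, b.sum_inner_mul_inner,
          orthonormal_iff_ite.mp b'.orthonormal j k]
    _ = ∑ j, e (b' j) * c (b' j) := by
        simp

private lemma psi_cancel {k : ℕ} (hk : 0 < k) {x y : A}
    (h : (k : A) * x = (k : A) * y) : x = y := by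
  have hk' : (k : ℝ) ≠ 0 := Nat.cast_ne_zero.mpr hk.ne'
  have h1 : ∀ z : A, algebraMap ℝ A (k : ℝ)⁻¹ * ((k : A) * z) = z := by
    intro z
    rw [← map_natCast (algebraMap ℝ A) k, ← mul_assoc, ← map_mul,
      inv_mul_cancel₀ hk', map_one, one_mul]
  rw [← h1 x, ← h1 y, h]

end Aux2

section AuxB
variable {A B : Type} [Ring A] [Algebra ℝ A] [CommRing B] [Algebra ℝ B]

private lemma psi_aeval_esymm {d : ℕ} (t : Fin d → B) (k : ℕ) :
    MvPolynomial.aeval t (MvPolynomial.esymm (Fin d) ℝ k)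
      = ∑ S ∈ powersetCard k (univ : Finset (Fin d)), ∏ i ∈ S, t i := by
  simp [MvPolynomial.esymm]

private lemma psi_psum_expand (f : B →ₐ[ℝ] A) {d : ℕ} (t : Fin d → B) (m : ℕ) :
    f (MvPolynomial.aeval t (MvPolynomial.psum (Fin d) ℝ m)) = ∑ i, (f (t i)) ^ m := by
  simp [MvPolynomial.psum]

private lemma psi_newton (f : B →ₐ[ℝ] A) {d : ℕ} (t : Fin d → B) (k : ℕ) :
    (k : A) * f (MvPolynomial.aeval t (MvPolynomial.esymm (Fin d) ℝ k))
      = (-1) ^ (k + 1) * ∑ a ∈ (antidiagonal k).filter (fun a => a.1 < k),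
          (-1) ^ a.1 * f (MvPolynomial.aeval t (MvPolynomial.esymm (Fin d) ℝ a.1))
            * (∑ i, (f (t i)) ^ a.2) := by
  have h0 := congrArg (fun p => f (MvPolynomial.aeval t p))
    (MvPolynomial.mul_esymm_eq_sum (Fin d) ℝ k)
  simp only [map_mul, map_sum, map_pow, map_natCast, map_neg, map_one] at h0
  rw [h0]
  congr 1
  refine Finset.sum_congr rfl fun a _ => ?_
  rw [psi_psum_expand]

private lemma psi_prod_expand (f : B →ₐ[ℝ] A) {d : ℕ} (t : Fin d → B) :
    (List.ofFn fun i => (1 : A) - f (t i)).prod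
      = ∑ k ∈ range (d + 1), (-1 : A) ^ k
          * f (MvPolynomial.aeval t (MvPolynomial.esymm (Fin d) ℝ k)) := by
  classical
  have h1 : (List.ofFn fun i => (1 : A) - f (t i))
      = (List.ofFn fun i => (1 : B) - t i).map f := by
    simp [List.map_ofFn, Function.comp_def]
  rw [h1, ← map_list_prod]
  have h2 : (List.ofFn fun i => (1 : B) - t i).prod
      = ∑ k ∈ range (d + 1), (-1 : B) ^ k
          * MvPolynomial.aeval t (MvPolynomial.esymm (Fin d) ℝ k) := by
    rw [List.prod_ofFn]
    have h3 : ∀ i : Fin d, (1 : B) - t i = (fun i => -t i) i + (fun _ => (1:B)) i := by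
      intro i; simp [sub_eq_neg_add]
    rw [Finset.prod_congr rfl fun i _ => h3 i, Finset.prod_add]
    rw [Finset.sum_powerset]
    have hcard : (univ : Finset (Fin d)).card = d := by simp
    rw [hcard]
    refine Finset.sum_congr rfl fun k _ => ?_
    rw [psi_aeval_esymm, Finset.mul_sum]
    refine Finset.sum_congr rfl fun S hS => ?_
    have hSc : S.card = k := (Finset.mem_powersetCard.mp hS).2
    rw [Finset.prod_const_one, mul_one]
    calc ∏ i ∈ S, -t i = ∏ i ∈ S, (-1 : B) * t i := by simp
      _ = (-1 : B) ^ k * ∏ i ∈ S, t i := by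
          rw [Finset.prod_mul_distrib, Finset.prod_const, hSc]
  rw [h2, map_sum]
  refine Finset.sum_congr rfl fun k _ => ?_
  rw [map_mul, map_pow, map_neg, map_one]

end AuxB

section Aux3
variable {V A : Type} [NormedAddCommGroup V] [InnerProductSpace ℝ V]
    [Ring A] [Algebra ℝ A] (c e : V →ₗ[ℝ] A)

private lemma psi_psum_indep
    (hcc : ∀ v w : V, c v * c w + c w * c v = algebraMap ℝ A (-2 * ⟪v, w⟫))
    (hee : ∀ v w : V, e v * e w + e w * e v = algebraMap ℝ A (-2 * ⟪v, w⟫))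
    (hce : ∀ v w : V, c v * e w + e w * c v = 0)
    {d : ℕ} (b b' : OrthonormalBasis (Fin d) ℝ V) (m : ℕ) :
    ∑ i, (e (b i) * c (b i)) ^ m = ∑ i, (e (b' i) * c (b' i)) ^ m := by
  have hsq : ∀ (bb : OrthonormalBasis (Fin d) ℝ V) (i : Fin d),
      (e (bb i) * c (bb i)) ^ 2 = algebraMap ℝ A (-1) := by
    intro bb i
    rw [pow_two]
    refine psi_T_sq c e hcc hee hce _ ?_
    simpa using orthonormal_iff_ite.mp bb.orthonormal i i
  rcases Nat.even_or_odd m with hm | hm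
  · obtain ⟨j, hj⟩ := hm
    have hpow : ∀ (bb : OrthonormalBasis (Fin d) ℝ V) (i : Fin d),
        (e (bb i) * c (bb i)) ^ m = algebraMap ℝ A ((-1) ^ j) := by
      intro bb i
      rw [hj, ← two_mul, pow_mul, hsq, map_pow]
    rw [Finset.sum_congr rfl fun i _ => hpow b i,
      Finset.sum_congr rfl fun i _ => hpow b' i]
  · obtain ⟨j, hj⟩ := hm
    have hpow : ∀ (bb : OrthonormalBasis (Fin d) ℝ V) (i : Fin d),
        (e (bb i) * c (bb i)) ^ m
          = algebraMap ℝ A ((-1) ^ j) * (e (bb i) * c (bb i)) := by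
      intro bb i
      rw [hj, pow_succ, pow_mul, hsq, map_pow]
    rw [Finset.sum_congr rfl fun i _ => hpow b i,
      Finset.sum_congr rfl fun i _ => hpow b' i, ← Finset.mul_sum, ← Finset.mul_sum,
      psi_F_indep c e b b']

end Aux3

/-- The element `2^{−d/2} Π_i (1 − e(b_i) c(b_i))` built from an orthonormal basis `b`. -/
def psiOfBasis {V A : Type} [NormedAddCommGroup V] [InnerProductSpace ℝ V]
    [Ring A] [Algebra ℝ A] (d : ℕ) (c e : V →ₗ[ℝ] A) (b : OrthonormalBasis (Fin d) ℝ V) : A :=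
  ((2 : ℝ) ^ (-(d : ℝ) / 2)) • (List.ofFn fun i => (1 : A) - e (b i) * c (b i)).prod

open RealInnerProductSpace in
/-- `ψ` does not depend on the choice of orthonormal basis. -/
theorem psi_independent_of_basis
    (d : ℕ) (V A : Type) [NormedAddCommGroup V] [InnerProductSpace ℝ V]
    [FiniteDimensional ℝ V] (hdim : Module.finrank ℝ V = d)
    [Ring A] [Algebra ℝ A]
    -- the two canonical inclusions `V → Cl(V ⊕ V)` with their Clifford relations
    (c e : V →ₗ[ℝ] A)
    (hcc : ∀ v w : V, c v * c w + c w * c v = algebraMap ℝ A (-2 * ⟪v, w⟫))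
    (hee : ∀ v w : V, e v * e w + e w * e v = algebraMap ℝ A (-2 * ⟪v, w⟫))
    (hce : ∀ v w : V, c v * e w + e w * c v = 0) :
    ∀ b b' : OrthonormalBasis (Fin d) ℝ V, psiOfBasis d c e b = psiOfBasis d c e b' := by
  intro b b'
  classical
  have horth : ∀ (bb : OrthonormalBasis (Fin d) ℝ V) (i j : Fin d), i ≠ j →
      ⟪bb i, bb j⟫ = 0 := by
    intro bb i j hij
    simpa [hij] using orthonormal_iff_ite.mp bb.orthonormal i j
  have hcomm : ∀ (bb : OrthonormalBasis (Fin d) ℝ V),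
      ∀ x ∈ Set.range (fun i => e (bb i) * c (bb i)),
      ∀ y ∈ Set.range (fun i => e (bb i) * c (bb i)), x * y = y * x := by
    rintro bb _ ⟨i, rfl⟩ _ ⟨j, rfl⟩
    rcases eq_or_ne i j with rfl | hij
    · rfl
    · exact psi_T_comm c e hcc hee hce _ _ (horth bb i j hij)
  letI : CommRing (Algebra.adjoin ℝ (Set.range (fun i => e (b i) * c (b i)))) :=
    Algebra.adjoinCommRingOfComm ℝ (hcomm b)
  letI : CommRing (Algebra.adjoin ℝ (Set.range (fun i => e (b' i) * c (b' i)))) :=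
    Algebra.adjoinCommRingOfComm ℝ (hcomm b')
  let t : Fin d → (Algebra.adjoin ℝ (Set.range (fun i => e (b i) * c (b i)))) :=
    fun i => ⟨e (b i) * c (b i), Algebra.subset_adjoin ⟨i, rfl⟩⟩
  let t' : Fin d → (Algebra.adjoin ℝ (Set.range (fun i => e (b' i) * c (b' i)))) :=
    fun i => ⟨e (b' i) * c (b' i), Algebra.subset_adjoin ⟨i, rfl⟩⟩
  have key : ∀ k : ℕ,
      (Algebra.adjoin ℝ (Set.range (fun i => e (b i) * c (b i)))).val
        (MvPolynomial.aeval t (MvPolynomial.esymm (Fin d) ℝ k))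
      = (Algebra.adjoin ℝ (Set.range (fun i => e (b' i) * c (b' i)))).val
        (MvPolynomial.aeval t' (MvPolynomial.esymm (Fin d) ℝ k)) := by
    intro k
    induction k using Nat.strong_induction_on with
    | _ k ih =>
      rcases Nat.eq_zero_or_pos k with rfl | hk
      · rw [MvPolynomial.esymm_zero, map_one, map_one, map_one, map_one]
      · refine psi_cancel hk ?_
        rw [psi_newton, psi_newton]
        congr 1
        refine Finset.sum_congr rfl fun a ha => ?_
        have ha1 : a.1 < k := (Finset.mem_filter.mp ha).2
        rw [ih a.1 ha1]
        congr 1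
        exact psi_psum_indep c e hcc hee hce b b' a.2
  have hb := psi_prod_expand
    (Algebra.adjoin ℝ (Set.range (fun i => e (b i) * c (b i)))).val t
  have hb' := psi_prod_expand
    (Algebra.adjoin ℝ (Set.range (fun i => e (b' i) * c (b' i)))).val t'
  unfold psiOfBasis
  congr 1
  calc (List.ofFn fun i => (1 : A) - e (b i) * c (b i)).prod
      = ∑ k ∈ range (d + 1), (-1 : A) ^ k
          * (Algebra.adjoin ℝ (Set.range (fun i => e (b i) * c (b i)))).val
            (MvPolynomial.aeval t (MvPolynomial.esymm (Fin d) ℝ k)) := hb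
    _ = ∑ k ∈ range (d + 1), (-1 : A) ^ k
          * (Algebra.adjoin ℝ (Set.range (fun i => e (b' i) * c (b' i)))).val
            (MvPolynomial.aeval t' (MvPolynomial.esymm (Fin d) ℝ k)) := by
        exact Finset.sum_congr rfl fun k _ => by rw [key k]
    _ = (List.ofFn fun i => (1 : A) - e (b' i) * c (b' i)).prod := hb'.symm
end
end
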